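/- Let A be a commutative ring complete with respect to an ideal J (i.e. A is isomorphic to its J-adic completion), and let M be an A-module which is separated, meaning the intersection of J^k M over all k is zero. If elements m_1, …, m_n of M have images generating M/JM as an A/J-module, then m_1, …, m_n generate M as an A-module. -/

import Mathlib

/-!
STATEMENT 3: Let `A` be a commutative ring complete with respect to an ideal `J`
(i.e. `A` is `J`-adically complete), and let `M` be an `A`-module which is separated,
meaning `⨅ k, J^k M = ⊥`.  If elements `m 1, …, m n` of `M` have images generating
`M/JM`, then `m 1, …, m n` generate `M`.  (Nakayama without finite generation.)
-/

theorem nakayama_of_complete_of_separated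
    (A : Type*) [CommRing A] (J : Ideal A) [IsAdicComplete J A]
    (M : Type*) [AddCommGroup M] [Module A M]
    (hsep : (⨅ k : ℕ, (J ^ k • ⊤ : Submodule A M)) = ⊥)
    (n : ℕ) (m : Fin n → M)
    (hgen : Submodule.span A (Set.range m) ⊔ (J • ⊤ : Submodule A M) = ⊤) :
    Submodule.span A (Set.range m) = ⊤ := by
  classical
  set φ : (Fin n → A) →ₗ[A] M := Fintype.linearCombination A m with hφ
  have hφ_apply : ∀ c : Fin n → A, φ c = ∑ i, c i • m i := fun c => rfl
  -- the key approximation step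
  have step : ∀ (k : ℕ) (y : M), y ∈ (J ^ k • ⊤ : Submodule A M) →
      ∃ d : Fin n → A, (∀ i, d i ∈ J ^ k) ∧
        y - φ d ∈ (J ^ (k + 1) • ⊤ : Submodule A M) := by
    intro k y hy
    -- consider the submodule of elements admitting such an approximation
    have hle : (J ^ k • ⊤ : Submodule A M) ≤
        Submodule.map φ (Submodule.pi Set.univ fun _ : Fin n => J ^ k) ⊔
          (J ^ (k + 1) • ⊤ : Submodule A M) := by
      rw [Submodule.smul_le]
      intro a ha x _
      have hx : x ∈ Submodule.span A (Set.range m) ⊔ (J • ⊤ : Submodule A M) := by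
        rw [hgen]; trivial
      obtain ⟨u, hu, v, hv, rfl⟩ := Submodule.mem_sup.mp hx
      rw [Submodule.mem_span_range_iff_exists_fun] at hu
      obtain ⟨b, hb⟩ := hu
      rw [smul_add]
      apply Submodule.add_mem_sup
      · refine ⟨a • b, ?_, ?_⟩
        · intro i _
          exact Ideal.mul_mem_right (b i) _ ha
        · rw [hφ_apply]
          simp_rw [Pi.smul_apply, smul_eq_mul, mul_smul, ← Finset.smul_sum, hb]
      · have : (J ^ (k + 1) • ⊤ : Submodule A M) = J ^ k • (J • ⊤ : Submodule A M) := by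
          rw [pow_succ, ← Submodule.smul_assoc, Ideal.smul_eq_mul]
        rw [this]
        exact Submodule.smul_mem_smul ha hv
    obtain ⟨u, hu, v, hv, huv⟩ := Submodule.mem_sup.mp (hle hy)
    obtain ⟨d, hd, rfl⟩ := hu
    exact ⟨d, fun i => hd i trivial, by rw [← huv]; abel_nf; simpa using hv⟩
  rw [eq_top_iff]
  rintro x -
  -- choose the correction terms
  choose d hd1 hd2 using step
  -- build the approximating sequence of coefficients
  let F : ∀ k : ℕ, {c : Fin n → A // x - φ c ∈ (J ^ k • ⊤ : Submodule A M)} :=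
    fun k => Nat.rec
      ⟨0, by simp⟩
      (fun k p => ⟨p.1 + d k (x - φ p.1) p.2, by
        have := hd2 k (x - φ p.1) p.2
        rw [map_add]
        convert this using 1
        abel⟩) k
  let c : ℕ → Fin n → A := fun k => (F k).1
  have hFc : ∀ k, x - φ (c k) ∈ (J ^ k • ⊤ : Submodule A M) := fun k => (F k).2
  have hdiff : ∀ k, ∀ i, c (k + 1) i - c k i ∈ J ^ k := by
    intro k i
    have : c (k + 1) = c k + d k (x - φ (c k)) (hFc k) := rfl
    rw [this]
    simpa using hd1 k (x - φ (c k)) (hFc k) i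
  -- differences between later terms lie in J^k
  have hdiff' : ∀ i, ∀ {k l : ℕ}, k ≤ l → c l i - c k i ∈ J ^ k := by
    intro i k l hkl
    induction l with
    | zero =>
      have : k = 0 := Nat.le_zero.mp hkl
      subst this; simpa using (Ideal.zero_mem _)
    | succ l ih =>
      rcases Nat.lt_or_ge k (l + 1) with h | h
      · have hk : k ≤ l := Nat.lt_succ_iff.mp h
        have h1 := ih hk
        have h2 : c (l + 1) i - c l i ∈ J ^ k :=
          Ideal.pow_le_pow_right hk (hdiff l i)
        have : c (l + 1) i - c k i = (c (l + 1) i - c l i) + (c l i - c k i) := by ring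
        rw [this]; exact Ideal.add_mem _ h2 h1
      · have : k = l + 1 := le_antisymm hkl h
        subst this; simpa using Ideal.zero_mem _
  -- use completeness to find the limit coefficients
  have hL : ∀ i : Fin n, ∃ L : A, ∀ k, c k i ≡ L [SMOD (J ^ k • ⊤ : Ideal A)] := by
    intro i
    apply IsPrecomplete.prec (IsAdicComplete.toIsPrecomplete)
    intro k l hkl
    rw [SModEq.sub_mem]
    have := hdiff' i hkl
    have hneg : c k i - c l i ∈ J ^ k := by
      have := (J ^ k).neg_mem this
      simpa using this
    simpa [Ideal.smul_eq_mul, Ideal.mul_top] using hneg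
  choose L hLspec using hL
  have key : ∀ k : ℕ, x - φ L ∈ (J ^ k • ⊤ : Submodule A M) := by
    intro k
    have h1 := hFc k
    have h2 : φ (c k) - φ L ∈ (J ^ k • ⊤ : Submodule A M) := by
      rw [← map_sub, hφ_apply]
      apply Submodule.sum_mem
      intro i _
      have : c k i - L i ∈ J ^ k := by
        have := (hLspec i k)
        rw [SModEq.sub_mem] at this
        simpa [Ideal.smul_eq_mul, Ideal.mul_top] using this
      exact Submodule.smul_mem_smul this trivial
    have : x - φ L = (x - φ (c k)) + (φ (c k) - φ L) := by abel
    rw [this]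
    exact Submodule.add_mem _ h1 h2
  have : x - φ L ∈ (⨅ k : ℕ, (J ^ k • ⊤ : Submodule A M)) :=
    Submodule.mem_iInf _ |>.mpr key
  rw [hsep, Submodule.mem_bot, sub_eq_zero] at this
  rw [this]
  rw [Submodule.mem_span_range_iff_exists_fun]
  exact ⟨L, (hφ_apply L).symm⟩
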